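/- Downward continuity for finitary variables: for every situation s and every pointwise non-increasing sequence (f_n)_{n∈ℕ} of finitary global variables f_n : Ω → ℝ̄, each bounded above by some real constant, that converges pointwise to a global variable f : Ω → ℝ̄, one has lim_{n→∞} E_V(f_n|s) = E_V(f|s). -/

import Mathlib

open Filter Topology

noncomputable section

/-- Addition on the extended reals with the convention `(+∞) + (−∞) = (−∞) + (+∞) = +∞`. -/
def eadd (a b : EReal) : EReal := if a = ⊤ ∨ b = ⊤ then ⊤ else a + b

/-- An extended real variable is bounded below. -/
def BddBelowF {Y : Type*} (f : Y → EReal) : Prop := ∃ M : ℝ, ∀ y, (M : EReal) ≤ f y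

/-- (E1): constants are preserved. -/
def UE1 {Y : Type*} (E : (Y → EReal) → EReal) : Prop :=
  ∀ c : ℝ, E (fun _ => (c : EReal)) = (c : EReal)

/-- (E2): sub-additivity on bounded below variables. -/
def UE2 {Y : Type*} (E : (Y → EReal) → EReal) : Prop :=
  ∀ f g : Y → EReal, BddBelowF f → BddBelowF g →
    E (fun y => eadd (f y) (g y)) ≤ eadd (E f) (E g)

/-- (E3): positive homogeneity on bounded below variables. -/
def UE3 {Y : Type*} (E : (Y → EReal) → EReal) : Prop :=
  ∀ l : ℝ, 0 < l → ∀ f : Y → EReal, BddBelowF f →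
    E (fun y => (l : EReal) * f y) = (l : EReal) * E f

/-- (E4): monotonicity on bounded below variables. -/
def UE4 {Y : Type*} (E : (Y → EReal) → EReal) : Prop :=
  ∀ f g : Y → EReal, BddBelowF f → BddBelowF g → (∀ y, f y ≤ g y) → E f ≤ E g

/-- (E5): continuity with respect to non-decreasing sequences of non-negative variables. -/
def UE5 {Y : Type*} (E : (Y → EReal) → EReal) : Prop :=
  ∀ (fs : ℕ → Y → EReal) (f : Y → EReal),
    (∀ n y, 0 ≤ fs n y) → (∀ n y, fs n y ≤ fs (n + 1) y) →
    (∀ y, Tendsto (fun n => fs n y) atTop (𝓝 (f y))) →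
    Tendsto (fun n => E (fs n)) atTop (𝓝 (E f))

/-- An upper expectation: a map satisfying (E1)–(E5). -/
def IsUpperExpectation {Y : Type*} (E : (Y → EReal) → EReal) : Prop :=
  UE1 E ∧ UE2 E ∧ UE3 E ∧ UE4 E ∧ UE5 E

/-- The situation formed by the first `n` states of the path `ω`. -/
def pfx {X : Type*} (ω : ℕ → X) (n : ℕ) : List X := List.ofFn (fun i : Fin n => ω i)

/-- The cylinder event of all paths that go through the situation `s`. -/
def Gamma {X : Type*} (s : List X) : Set (ℕ → X) := {ω | pfx ω s.length = s}

/-- A process is bounded below. -/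
def BddBelowP {X : Type*} (M : List X → EReal) : Prop := ∃ B : ℝ, ∀ t, (B : EReal) ≤ M t

/-- A supermartingale for the imprecise probabilities tree `Q`. -/
def IsSupermartingale {X : Type*} (Q : List X → (X → EReal) → EReal)
    (M : List X → EReal) : Prop :=
  ∀ s : List X, Q s (fun x => M (s ++ [x])) ≤ M s

/-- The pathwise limit inferior of a process. -/
def liminfP {X : Type*} (M : List X → EReal) (ω : ℕ → X) : EReal :=
  Filter.liminf (fun n => M (pfx ω n)) atTop

/-- The game-theoretic upper expectation `E_V(f | s)`. -/
def upExp {X : Type*} (Q : List X → (X → EReal) → EReal)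
    (f : (ℕ → X) → EReal) (s : List X) : EReal :=
  sInf {x : EReal | ∃ M : List X → EReal, IsSupermartingale Q M ∧ BddBelowP M ∧
    (∀ ω ∈ Gamma s, f ω ≤ liminfP M ω) ∧ M s = x}

/-- An event `A` is strictly almost sure within `Γ(s)`: some `s`-test supermartingale
converges to `+∞` on every path of `Γ(s)` outside `A`. -/
def StrictlyAS {X : Type*} (Q : List X → (X → EReal) → EReal) (s : List X)
    (A : Set (ℕ → X)) : Prop :=
  ∃ T : List X → EReal, IsSupermartingale Q T ∧ (∀ t, 0 ≤ T t) ∧ T s = 1 ∧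
    ∀ ω ∈ Gamma s, ω ∉ A → Tendsto (fun n => T (pfx ω n)) atTop (𝓝 (⊤ : EReal))

/-- An `n`-measurable global variable only depends on the first `n` states. -/
def NMeasurable {X : Type*} (n : ℕ) (f : (ℕ → X) → EReal) : Prop :=
  ∀ ω ω' : ℕ → X, pfx ω n = pfx ω' n → f ω = f ω'

/-- A finitary global variable is `n`-measurable for some `n`. -/
def Finitary {X : Type*} (f : (ℕ → X) → EReal) : Prop := ∃ n : ℕ, NMeasurable n f

/-- The bounded below global variables that are pointwise limits of finitary variables. -/
def VbLim {X : Type*} : Set ((ℕ → X) → EReal) :=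
  {f | BddBelowF f ∧ ∃ gs : ℕ → (ℕ → X) → EReal, (∀ n, Finitary (gs n)) ∧
    ∀ ω, Tendsto (fun n => gs n ω) atTop (𝓝 (f ω))}


/-! ### Auxiliary lemmas -/

lemma eadd_coe (a : EReal) (r : ℝ) : eadd a (r : EReal) = a + (r : EReal) := by
  unfold eadd
  split_ifs with h
  · rcases h with h | h
    · rw [h, EReal.top_add_coe]
    · exact absurd h (EReal.coe_ne_top r)
  · rfl

lemma EReal.le_of_forall_add_eps {a b : EReal} (h : ∀ ε : ℝ, 0 < ε → a ≤ b + (ε:EReal)) :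
    a ≤ b := by
  induction b with
  | bot => simpa using h 1 one_pos
  | top => exact le_top
  | coe r =>
    by_contra hc
    push_neg at hc
    induction a with
    | bot => exact absurd hc (by simp)
    | top =>
      have := h 1 one_pos
      rw [← EReal.coe_add] at this
      exact (EReal.coe_ne_top _) (top_le_iff.1 this)
    | coe q =>
      have hrq : r < q := by exact_mod_cast hc
      have h2 := h ((q - r)/2) (by linarith)
      rw [← EReal.coe_add] at h2
      have : q ≤ r + (q-r)/2 := by exact_mod_cast h2
      linarith

lemma EReal.le_add_eps (a : EReal) {ε : ℝ} (hε : 0 ≤ ε) : a ≤ a + (ε:EReal) := by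
  calc a = a + 0 := (add_zero a).symm
    _ ≤ a + (ε:EReal) := add_le_add_right (by exact_mod_cast hε) a

section PfxLemmas

variable {X : Type*}

lemma pfx_length (ω : ℕ → X) (n : ℕ) : (pfx ω n).length = n := by simp [pfx]

lemma pfx_getElem (ω : ℕ → X) (n i : ℕ) (h : i < (pfx ω n).length) : (pfx ω n)[i] = ω i := by
  simp [pfx]

lemma pfx_take (ω : ℕ → X) (j k : ℕ) (h : j ≤ k) : (pfx ω k).take j = pfx ω j := by
  apply List.ext_getElem
  · simp [pfx_length, h]
  · intro i h1 h2
    rw [List.getElem_take, pfx_getElem, pfx_getElem]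

lemma pfx_getD (ω : ℕ → X) (n i : ℕ) (d : X) (h : i < n) : (pfx ω n).getD i d = ω i := by
  rw [List.getD_eq_getElem _ _ (by rwa [pfx_length]), pfx_getElem]

lemma pfx_prefix (ω : ℕ → X) {j k : ℕ} (h : j ≤ k) : pfx ω j <+: pfx ω k := by
  rw [← pfx_take ω j k h]; exact List.take_prefix _ _

lemma mem_Gamma_pfx_self (ω : ℕ → X) (k : ℕ) : ω ∈ Gamma (pfx ω k) := by
  show pfx ω (pfx ω k).length = pfx ω k
  rw [pfx_length]

lemma mem_Gamma_take {ω : ℕ → X} {u : List X} (hω : ω ∈ Gamma u) {j : ℕ} (h : j ≤ u.length) :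
    pfx ω j = u.take j := by
  have hω' : pfx ω u.length = u := hω
  have := pfx_take ω j u.length h
  rw [hω'] at this
  exact this.symm

lemma Gamma_mono {u t : List X} (h : u <+: t) : Gamma t ⊆ Gamma u := by
  intro ω hω
  have h1 : pfx ω u.length = t.take u.length := mem_Gamma_take hω h.length_le
  rw [List.prefix_iff_eq_take] at h
  show pfx ω u.length = u
  rw [h1, ← h]

lemma prefix_pfx_of_mem {ω : ℕ → X} {u : List X} (hω : ω ∈ Gamma u) {k : ℕ}
    (h : u.length ≤ k) : u <+: pfx ω k := by
  have h1 := pfx_prefix ω h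
  have hω' : pfx ω u.length = u := hω
  rwa [hω'] at h1

/-- Extend a situation to a path by repeating an arbitrary state. -/
def extPath [Nonempty X] (u : List X) : ℕ → X := fun i => u.getD i (Classical.arbitrary X)

lemma extPath_mem [Nonempty X] (u : List X) : extPath u ∈ Gamma u := by
  show pfx (extPath u) u.length = u
  apply List.ext_getElem (by simp [pfx_length])
  intro i h1 h2
  rw [pfx_getElem]
  show u.getD i _ = u[i]
  rw [List.getD_eq_getElem _ _ h2]

lemma mem_Gamma_iff_forall [Nonempty X] (u : List X) (ω : ℕ → X) :
    ω ∈ Gamma u ↔ ∀ i < u.length, ω i = u.getD i (Classical.arbitrary X) := by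
  constructor
  · intro hω i hi
    have h1 : pfx ω u.length = u := hω
    rw [← h1, pfx_getD ω u.length i _ hi]
  · intro h
    show pfx ω u.length = u
    apply List.ext_getElem (pfx_length ω u.length)
    intro i h1 h2
    rw [pfx_getElem, h i h2, List.getD_eq_getElem _ _ h2]

end PfxLemmas

/-! ### The finite-horizon backward recursion -/

def Vaux {X : Type*} (Q : List X → (X → EReal) → EReal) (g0 : List X → EReal) :
    ℕ → List X → EReal :=
  fun k => Nat.rec g0 (fun k ih t => Q t (fun x => ih (t ++ [x]))) k

section VauxLemmas

variable {X : Type*} {Q : List X → (X → EReal) → EReal} (hQ : ∀ s, IsUpperExpectation (Q s))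
  {g0 : List X → EReal} {L : ℝ} (hg : ∀ t, (L : EReal) ≤ g0 t)

include hQ hg

lemma Vaux_lb : ∀ (k : ℕ) (t : List X), (L : EReal) ≤ Vaux Q g0 k t := by
  intro k
  induction k with
  | zero => exact hg
  | succ k ih =>
    intro t
    calc (L:EReal) = Q t (fun _ => (L:EReal)) := ((hQ t).1 L).symm
      _ ≤ Q t (fun x => Vaux Q g0 k (t ++ [x])) :=
          (hQ t).2.2.2.1 _ _ ⟨L, fun _ => le_refl _⟩ ⟨L, fun x => ih _⟩ (fun x => ih _)
      _ = Vaux Q g0 (k+1) t := rfl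

lemma Vaux_le_const (r : ℝ) :
    ∀ (k : ℕ) (t : List X),
      (∀ t', t <+: t' → t'.length = t.length + k → g0 t' ≤ (r:EReal)) →
      Vaux Q g0 k t ≤ (r:EReal) := by
  intro k
  induction k with
  | zero => intro t h; exact h t (List.prefix_refl t) (by simp)
  | succ k ih =>
    intro t h
    have hch : ∀ x, Vaux Q g0 k (t ++ [x]) ≤ (r:EReal) := by
      intro x
      apply ih (t ++ [x])
      intro t' h1 h2
      apply h t' ((List.prefix_append t [x]).trans h1)
      simp only [List.length_append, List.length_singleton] at h2 ⊢
      omega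
    calc Vaux Q g0 (k+1) t = Q t (fun x => Vaux Q g0 k (t ++ [x])) := rfl
      _ ≤ Q t (fun _ => (r:EReal)) :=
          (hQ t).2.2.2.1 _ _ ⟨L, fun x => Vaux_lb hQ hg k _⟩ ⟨r, fun _ => le_refl _⟩ hch
      _ = (r:EReal) := (hQ t).1 r

end VauxLemmas

-- The process obtained by following `M + ε` until stopping, then the backward recursion.
open Classical in
def Nproc {X : Type*} (Stopped : List X → Prop) (V M : List X → EReal) (ε : ℝ) :
    List X → EReal :=
  fun t => if Stopped t then V t else M t + (ε : EReal)

lemma Nproc_pos {X : Type*} {Stopped : List X → Prop} {V M : List X → EReal} {ε : ℝ}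
    {t : List X} (h : Stopped t) : Nproc Stopped V M ε t = V t := by
  simp only [Nproc, if_pos h]

lemma Nproc_neg {X : Type*} {Stopped : List X → Prop} {V M : List X → EReal} {ε : ℝ}
    {t : List X} (h : ¬ Stopped t) : Nproc Stopped V M ε t = M t + (ε : EReal) := by
  simp only [Nproc, if_neg h]


/-- The key construction: given a bounded below supermartingale `M` whose liminf dominates
`f` on `Γ(s)`, for every `ε > 0` there is an `n` with `E_V(fs n | s) ≤ M s + ε`. -/
lemma stmt17_key {X : Type*} [Fintype X] [Nonempty X]
    (Q : List X → (X → EReal) → EReal) (hQ : ∀ s : List X, IsUpperExpectation (Q s))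
    (s : List X) (fs : ℕ → (ℕ → X) → EReal)
    (hfin : ∀ n, Finitary (fs n))
    (habove : ∀ n, ∃ c : ℝ, ∀ ω, fs n ω ≤ (c : EReal))
    (hmono : ∀ n ω, fs (n + 1) ω ≤ fs n ω)
    (f : (ℕ → X) → EReal)
    (hconv : ∀ ω, Tendsto (fun n => fs n ω) atTop (𝓝 (f ω)))
    (M : List X → EReal) (hMsm : IsSupermartingale Q M)
    (B : ℝ) (hB : ∀ t, (B : EReal) ≤ M t)
    (hMdom : ∀ ω ∈ Gamma s, f ω ≤ liminfP M ω)
    (ε : ℝ) (hε : 0 < ε) :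
    ∃ n, upExp Q (fs n) s ≤ M s + (ε : EReal) := by
  classical
  have hfs_anti : ∀ ω, Antitone (fun n => fs n ω) := fun ω =>
    antitone_nat_of_succ_le (fun n => hmono n ω)
  obtain ⟨m, hm⟩ : ∃ m : ℕ → ℕ, ∀ n, NMeasurable (m n) (fs n) :=
    ⟨fun n => (hfin n).choose, fun n => (hfin n).choose_spec⟩
  set L : ℝ := B - 1 with hL
  -- transfer of measurability along cylinders
  have hconst : ∀ (n : ℕ) (u : List X), m n ≤ u.length →
      ∀ ω ∈ Gamma u, ∀ ω' ∈ Gamma u, fs n ω = fs n ω' := by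
    intro n u hu ω hω ω' hω'
    apply hm n
    rw [mem_Gamma_take hω (le_trans hu (le_refl _)), mem_Gamma_take hω' hu]
  -- the good situations
  set Good : List X → Prop := fun u => s <+: u ∧
    ∃ n, m n ≤ u.length ∧ ∀ ω ∈ Gamma u, fs n ω ≤ M u + (ε:EReal) with hGood
  -- every path in Γ(s) passes through a good situation
  have hcover : ∀ ω ∈ Gamma s, ∃ k, Good (pfx ω k) := by
    intro ω hω
    have hgen : ∀ (n k : ℕ), m n ≤ k → s.length ≤ k → fs n ω ≤ M (pfx ω k) + (ε:EReal) →
        Good (pfx ω k) := by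
      intro n k h1 h2 h3
      refine ⟨prefix_pfx_of_mem hω h2, n, by rw [pfx_length]; exact h1, ?_⟩
      intro ω' hω'
      have : fs n ω' = fs n ω :=
        hconst n (pfx ω k) (by rw [pfx_length]; exact h1) ω' hω' ω (mem_Gamma_pfx_self ω k)
      rw [this]; exact h3
    by_cases hbot : f ω = ⊥
    · have htd : Tendsto (fun n => fs n ω) atTop (𝓝 (⊥ : EReal)) := hbot ▸ hconv ω
      obtain ⟨n, hn⟩ := (htd.eventually_lt_const (bot_lt_iff_ne_bot.2 (EReal.coe_ne_bot B))).exists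
      refine ⟨max (m n) s.length, hgen n _ (le_max_left _ _) (le_max_right _ _) ?_⟩
      calc fs n ω ≤ (B:EReal) := hn.le
        _ ≤ M (pfx ω (max (m n) s.length)) := hB _
        _ ≤ _ := EReal.le_add_eps _ hε.le
    · have htop : f ω ≠ ⊤ := by
        intro h
        have h0 : f ω ≤ fs 0 ω :=
          le_of_tendsto (hconv ω) (eventually_atTop.2 ⟨0, fun k _ => hfs_anti ω (Nat.zero_le k)⟩)
        obtain ⟨c0, hc0⟩ := habove 0
        have h1 := h0.trans (hc0 ω)
        rw [h] at h1
        exact (EReal.coe_ne_top c0) (top_le_iff.1 h1)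
      obtain ⟨r, hr⟩ : ∃ r : ℝ, f ω = (r:EReal) := ⟨_, (EReal.coe_toReal htop hbot).symm⟩
      obtain ⟨n, hn⟩ := ((hconv ω).eventually_lt_const
        (show f ω < ((r + ε/2 :ℝ):EReal) by rw [hr]; exact_mod_cast (by linarith : r < r + ε/2))).exists
      have hlim : ((r - ε/2:ℝ):EReal) < liminf (fun k => M (pfx ω k)) atTop := by
        calc ((r-ε/2:ℝ):EReal) < (r:EReal) := by exact_mod_cast (by linarith : r - ε/2 < r)
          _ = f ω := hr.symm
          _ ≤ _ := hMdom ω hω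
      have hfreq : ∃ᶠ k in atTop, ((r - ε/2:ℝ):EReal) < M (pfx ω k) :=
        (eventually_lt_of_lt_liminf hlim).frequently
      obtain ⟨k, hk1, hk2⟩ :=
        (hfreq.and_eventually (eventually_ge_atTop (max (m n) s.length))).exists
      refine ⟨k, hgen n k (le_trans (le_max_left _ _) hk2) (le_trans (le_max_right _ _) hk2) ?_⟩
      calc fs n ω ≤ ((r + ε/2:ℝ):EReal) := hn.le
        _ = ((r - ε/2:ℝ):EReal) + (ε:EReal) := by
            rw [← EReal.coe_add]; norm_cast; ring
        _ ≤ M (pfx ω k) + (ε:EReal) := add_le_add_left hk1.le _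
  -- compactness: finitely many good situations cover Γ(s)
  letI : TopologicalSpace X := ⊥
  haveI : DiscreteTopology X := ⟨rfl⟩
  haveI : CompactSpace X := Finite.compactSpace
  have hGopen : ∀ u : List X, IsOpen (Gamma (X := X) u) := by
    intro u
    have he : Gamma (X := X) u = ⋂ i ∈ Finset.range u.length,
        (fun ω : ℕ → X => ω i) ⁻¹' {u.getD i (Classical.arbitrary X)} := by
      ext ω
      simp only [Set.mem_iInter, Set.mem_preimage, Set.mem_singleton_iff, Finset.mem_range]
      exact mem_Gamma_iff_forall u ω
    rw [he]
    exact isOpen_biInter_finset fun i _ =>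
      (continuous_apply i).isOpen_preimage _ (isOpen_discrete _)
  have hGclosed : IsClosed (Gamma (X := X) s) := by
    have he : Gamma (X := X) s = ⋂ i ∈ Finset.range s.length,
        (fun ω : ℕ → X => ω i) ⁻¹' {s.getD i (Classical.arbitrary X)} := by
      ext ω
      simp only [Set.mem_iInter, Set.mem_preimage, Set.mem_singleton_iff, Finset.mem_range]
      exact mem_Gamma_iff_forall s ω
    rw [he]
    exact isClosed_biInter fun i _ =>
      IsClosed.preimage (continuous_apply i) (isClosed_discrete _)
  have hcomp : IsCompact (Gamma (X := X) s) := hGclosed.isCompact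
  have hsub : Gamma (X := X) s ⊆ ⋃ (i : {u : List X // Good u}), Gamma i.1 := by
    intro ω hω
    obtain ⟨k, hk⟩ := hcover ω hω
    exact Set.mem_iUnion.2 ⟨⟨pfx ω k, hk⟩, mem_Gamma_pfx_self ω k⟩
  obtain ⟨T, hT⟩ := hcomp.elim_finite_subcover
    (fun i : {u : List X // Good u} => Gamma i.1) (fun i => hGopen i.1) hsub
  -- the witnesses
  have hwit1 : ∀ i : {u : List X // Good u}, m i.2.2.choose ≤ i.1.length :=
    fun i => i.2.2.choose_spec.1
  have hwit2 : ∀ i : {u : List X // Good u}, ∀ ω ∈ Gamma i.1,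
      fs i.2.2.choose ω ≤ M i.1 + (ε:EReal) := fun i => i.2.2.choose_spec.2
  set nstar : ℕ := T.sup (fun i => i.2.2.choose) with hnstar
  set mstar : ℕ := m nstar with hmstar
  set g0 : List X → EReal := fun t => fs nstar (extPath t) ⊔ ((L:ℝ):EReal) with hg0
  have hg0lb : ∀ t, ((L:ℝ):EReal) ≤ g0 t := fun t => le_sup_right
  set V : List X → EReal := fun t => Vaux Q g0 (mstar - t.length) t with hV
  have hVlb : ∀ t, ((L:ℝ):EReal) ≤ V t := fun t => Vaux_lb hQ hg0lb _ t
  have hVconst : ∀ t : List X, mstar ≤ t.length → V t = g0 t := by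
    intro t ht
    show Vaux Q g0 (mstar - t.length) t = g0 t
    rw [Nat.sub_eq_zero_of_le ht]
    rfl
  have hVrec : ∀ t : List X, t.length < mstar → V t = Q t (fun x => V (t ++ [x])) := by
    intro t ht
    show Vaux Q g0 (mstar - t.length) t = _
    have e1 : mstar - t.length = (mstar - (t.length + 1)) + 1 := by omega
    rw [e1]
    show Q t (fun x => Vaux Q g0 (mstar - (t.length + 1)) (t ++ [x])) = _
    congr 1
    funext x
    show _ = Vaux Q g0 (mstar - (t ++ [x]).length) (t ++ [x])
    congr 2
    simp
  -- g0 is real-valued: it lies in [L, max c L]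
  have hg0top : ∀ t, g0 t ≠ ⊤ := by
    intro t
    have h1 : fs nstar (extPath t) < ⊤ :=
      lt_of_le_of_lt ((habove nstar).choose_spec _) (EReal.coe_lt_top _)
    exact (sup_lt_iff.mpr ⟨h1, EReal.coe_lt_top L⟩).ne
  have hg0bot : ∀ t, g0 t ≠ ⊥ :=
    fun t => (lt_of_lt_of_le (EReal.bot_lt_coe L) (hg0lb t)).ne'
  -- L ≤ M u + ε for every u
  have hLle : ∀ u : List X, ((L:ℝ):EReal) ≤ M u + (ε:EReal) := by
    intro u
    calc ((L:ℝ):EReal) ≤ (B:EReal) := by exact_mod_cast (by linarith : L ≤ B)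
      _ ≤ M u := hB u
      _ ≤ _ := EReal.le_add_eps _ hε.le
  -- key estimate at good stopped situations
  have hkeyV : ∀ i : {u : List X // Good u}, i ∈ T → V i.1 ≤ M i.1 + (ε:EReal) := by
    intro i hi
    have hwle : i.2.2.choose ≤ nstar :=
      Finset.le_sup (f := fun i : {u : List X // Good u} => i.2.2.choose) hi
    have ha_top : fs i.2.2.choose (extPath i.1) ⊔ ((L:ℝ):EReal) ≠ ⊤ := by
      have h1 : fs i.2.2.choose (extPath i.1) < ⊤ :=
        lt_of_le_of_lt ((habove _).choose_spec _) (EReal.coe_lt_top _)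
      exact (sup_lt_iff.mpr ⟨h1, EReal.coe_lt_top L⟩).ne
    have ha_bot : fs i.2.2.choose (extPath i.1) ⊔ ((L:ℝ):EReal) ≠ ⊥ :=
      (lt_of_lt_of_le (EReal.bot_lt_coe L) le_sup_right).ne'
    obtain ⟨rK, hrK⟩ : ∃ rK : ℝ, fs i.2.2.choose (extPath i.1) ⊔ ((L:ℝ):EReal) = (rK:EReal) :=
      ⟨_, (EReal.coe_toReal ha_top ha_bot).symm⟩
    have hVle : V i.1 ≤ (rK:EReal) := by
      apply Vaux_le_const hQ hg0lb
      intro t' hpre hlen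
      rw [← hrK]
      have hmem' : extPath t' ∈ Gamma i.1 := Gamma_mono hpre (extPath_mem t')
      have h1 : fs nstar (extPath t') ≤ fs i.2.2.choose (extPath t') := hfs_anti _ hwle
      have h2 : fs i.2.2.choose (extPath t') = fs i.2.2.choose (extPath i.1) :=
        hconst _ i.1 (hwit1 i) _ hmem' _ (extPath_mem i.1)
      calc g0 t' ≤ fs i.2.2.choose (extPath t') ⊔ ((L:ℝ):EReal) := sup_le_sup_right h1 _
        _ = _ := by rw [h2]
    refine hVle.trans ?_
    rw [← hrK]
    exact sup_le (hwit2 i _ (extPath_mem i.1)) (hLle i.1)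
  -- the stopped region
  set Stopped : List X → Prop := fun t => ∃ i ∈ T, i.1 <+: t with hStopped
  set N : List X → EReal := Nproc Stopped V M ε with hN
  -- lower bound for N
  have hNlb : ∀ t, ((min B L : ℝ):EReal) ≤ N t := by
    intro t
    by_cases h : Stopped t
    · rw [hN, Nproc_pos h]
      exact le_trans (by exact_mod_cast min_le_right B L) (hVlb t)
    · rw [hN, Nproc_neg h]
      calc ((min B L : ℝ):EReal) ≤ (B:EReal) := by exact_mod_cast min_le_left B L
        _ ≤ M t := hB t
        _ ≤ _ := EReal.le_add_eps _ hε.le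
  -- N s ≤ M s + ε
  have hNs : N s ≤ M s + (ε:EReal) := by
    by_cases h : Stopped s
    · obtain ⟨i, hi, hpre⟩ := h
      have heq : i.1 = s :=
        hpre.eq_of_length (le_antisymm hpre.length_le i.2.1.length_le)
      rw [hN, Nproc_pos ⟨i, hi, hpre⟩, ← heq]
      exact hkeyV i hi
    · rw [hN, Nproc_neg h]
  -- supermartingale property
  have hNsm : IsSupermartingale Q N := by
    intro t
    by_cases hst : Stopped t
    · have hch : ∀ x, Stopped (t ++ [x]) := by
        intro x
        obtain ⟨i, hi, hp⟩ := hst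
        exact ⟨i, hi, hp.trans (List.prefix_append t [x])⟩
      have hNt : N t = V t := Nproc_pos hst
      have hNc : ∀ x, N (t ++ [x]) = V (t ++ [x]) := fun x => Nproc_pos (hch x)
      rcases lt_or_ge t.length mstar with hlen | hlen
      · have e : Q t (fun x => N (t ++ [x])) = Q t (fun x => V (t ++ [x])) := by
          congr 1; funext x; rw [hNc x]
        rw [e, hNt, hVrec t hlen]
      · have hgc : ∀ x, g0 (t ++ [x]) = g0 t := by
          intro x
          show fs nstar (extPath (t ++ [x])) ⊔ _ = fs nstar (extPath t) ⊔ _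
          congr 1
          exact hconst nstar t hlen _
            (Gamma_mono (List.prefix_append t [x]) (extPath_mem (t ++ [x]))) _ (extPath_mem t)
        obtain ⟨rg, hrg⟩ : ∃ rg : ℝ, g0 t = (rg:EReal) :=
          ⟨_, (EReal.coe_toReal (hg0top t) (hg0bot t)).symm⟩
        apply le_of_eq
        have hVc : ∀ x, V (t ++ [x]) = g0 t := by
          intro x
          rw [hVconst (t ++ [x]) (by simp; omega), hgc x]
        calc Q t (fun x => N (t ++ [x])) = Q t (fun _ => (rg:EReal)) := by
              congr 1; funext x; rw [hNc x, hVc x, hrg]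
          _ = (rg:EReal) := (hQ t).1 rg
          _ = N t := by rw [hNt, hVconst t hlen, hrg]
    · have hchle : ∀ x, N (t ++ [x]) ≤ M (t ++ [x]) + (ε:EReal) := by
        intro x
        by_cases h : Stopped (t ++ [x])
        · obtain ⟨i, hi, hp⟩ := h
          rcases List.prefix_concat_iff.1 hp with he | hp'
          · rw [hN, Nproc_pos ⟨i, hi, hp⟩, ← he]
            exact hkeyV i hi
          · exact absurd ⟨i, hi, hp'⟩ hst
        · rw [hN, Nproc_neg h]
      have h4 : Q t (fun x => N (t ++ [x])) ≤ Q t (fun x => M (t ++ [x]) + (ε:EReal)) :=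
        (hQ t).2.2.2.1 _ _ ⟨min B L, fun x => hNlb _⟩
          ⟨B, fun x => le_trans (hB _) (EReal.le_add_eps _ hε.le)⟩ hchle
      have h2 : Q t (fun x => eadd (M (t ++ [x])) (ε:EReal)) ≤
          eadd (Q t (fun x => M (t ++ [x]))) (Q t (fun _ => (ε:EReal))) :=
        (hQ t).2.1 _ _ ⟨B, fun x => hB _⟩ ⟨ε, fun _ => le_refl _⟩
      rw [(hQ t).1 ε, eadd_coe] at h2
      have e3 : (fun x => eadd (M (t ++ [x])) (ε:EReal)) =
          fun x => M (t ++ [x]) + (ε:EReal) := funext fun x => eadd_coe _ _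
      rw [e3] at h2
      calc Q t (fun x => N (t ++ [x])) ≤ Q t (fun x => M (t ++ [x]) + (ε:EReal)) := h4
        _ ≤ Q t (fun x => M (t ++ [x])) + (ε:EReal) := h2
        _ ≤ M t + (ε:EReal) := add_le_add_left (hMsm t) _
        _ = N t := (Nproc_neg hst).symm
  -- domination of fs nstar
  have hNdom : ∀ ω ∈ Gamma s, fs nstar ω ≤ liminfP N ω := by
    intro ω hω
    obtain ⟨i, hiT, hωu⟩ : ∃ i, ∃ _ : i ∈ T, ω ∈ Gamma i.1 := Set.mem_iUnion₂.1 (hT hω)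
    apply le_liminf_of_le (by isBoundedDefault)
    filter_upwards [eventually_ge_atTop (max i.1.length mstar)] with k hk
    have hk1 : i.1.length ≤ k := le_trans (le_max_left _ _) hk
    have hk2 : mstar ≤ k := le_trans (le_max_right _ _) hk
    have hstk : Stopped (pfx ω k) := ⟨i, hiT, prefix_pfx_of_mem hωu hk1⟩
    have hNk : N (pfx ω k) = g0 (pfx ω k) := by
      rw [hN, Nproc_pos hstk]
      exact hVconst _ (by rw [pfx_length]; exact hk2)
    rw [hNk]
    have heq : fs nstar (extPath (pfx ω k)) = fs nstar ω := by
      apply hm nstar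
      have e1 : pfx (extPath (pfx ω k)) mstar = (pfx ω k).take mstar :=
        mem_Gamma_take (extPath_mem (pfx ω k)) (by rw [pfx_length]; exact hk2)
      rw [e1, pfx_take ω mstar k hk2]
    calc fs nstar ω = fs nstar (extPath (pfx ω k)) := heq.symm
      _ ≤ g0 (pfx ω k) := le_sup_left
  -- conclude
  refine ⟨nstar, le_trans (sInf_le ⟨N, hNsm, ⟨min B L, hNlb⟩, hNdom, rfl⟩) hNs⟩

/-- downward continuity with respect to non-increasing sequences of finitary,
bounded above global variables. -/
theorem stmt17 {X : Type*} [Fintype X] [Nonempty X]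
    (Q : List X → (X → EReal) → EReal) (hQ : ∀ s : List X, IsUpperExpectation (Q s))
    (s : List X) (fs : ℕ → (ℕ → X) → EReal)
    (hfin : ∀ n, Finitary (fs n))
    (habove : ∀ n, ∃ c : ℝ, ∀ ω, fs n ω ≤ (c : EReal))
    (hmono : ∀ n ω, fs (n + 1) ω ≤ fs n ω)
    (f : (ℕ → X) → EReal)
    (hconv : ∀ ω, Tendsto (fun n => fs n ω) atTop (𝓝 (f ω))) :
    Tendsto (fun n => upExp Q (fs n) s) atTop (𝓝 (upExp Q f s)) := by
  classical
  have hfs_anti : ∀ ω, Antitone (fun n => fs n ω) := fun ω =>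
    antitone_nat_of_succ_le (fun n => hmono n ω)
  have hf_le : ∀ n ω, f ω ≤ fs n ω := by
    intro n ω
    exact le_of_tendsto (hconv ω) (eventually_atTop.2 ⟨n, fun k hk => hfs_anti ω hk⟩)
  have hmonoE : ∀ (g h : (ℕ → X) → EReal), (∀ ω, g ω ≤ h ω) → upExp Q g s ≤ upExp Q h s := by
    intro g h hgh
    apply sInf_le_sInf
    rintro x ⟨M, h1, h2, h3, h4⟩
    exact ⟨M, h1, h2, fun ω hω => (hgh ω).trans (h3 ω hω), h4⟩
  have hanti : Antitone (fun n => upExp Q (fs n) s) :=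
    antitone_nat_of_succ_le fun n => hmonoE _ _ (hmono n)
  have htend : Tendsto (fun n => upExp Q (fs n) s) atTop (𝓝 (⨅ n, upExp Q (fs n) s)) :=
    tendsto_atTop_iInf hanti
  suffices hkey : (⨅ n, upExp Q (fs n) s) = upExp Q f s by rw [← hkey]; exact htend
  apply le_antisymm
  · apply le_sInf
    rintro x ⟨M, hMsm, ⟨B, hB⟩, hMdom, rfl⟩
    apply EReal.le_of_forall_add_eps
    intro ε hε
    obtain ⟨n, hn⟩ := stmt17_key Q hQ s fs hfin habove hmono f hconv M hMsm B hB hMdom ε hε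
    exact le_trans (iInf_le _ n) hn
  · exact le_iInf fun n => hmonoE f (fs n) (hf_le n)
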